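/- arXiv:1802.07229 — 2 statements merged into one kernel-verified Lean document; each statement's English description precedes it below -/
import Mathlib

section
/- Let D be a nonempty finite set of probability mass functions on a countable set X, μ_D the uniform mixture of D, L : [0,1] → [0,M] a convex, monotone decreasing loss function, and p a probability distribution on X. For each q ∈ D define q'(x) = q(x)·𝟙[q(x)·ε₁ ≤ 3·μ_D(x)·M] (mass outside this event moved to a fixed point x*, where we assume p(x*) = 0). Let μ'_D be the uniform mixture of the q'. Then E_{x∼p}[L(μ'_D(x))] ≤ max_{q ∈ D} E_{x∼p}[L(q(x))] + ε₁/3. -/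
open scoped Classical BigOperators

theorem stmt6 {X : Type*} [Countable X] (M ε₁ : ℝ) (hM : 0 < M) (hε : 0 < ε₁)
    (L : ℝ → ℝ) (hconv : ConvexOn ℝ (Set.Icc 0 1) L)
    (hanti : AntitoneOn L (Set.Icc 0 1))
    (hL : ∀ t ∈ Set.Icc (0:ℝ) 1, L t ∈ Set.Icc 0 M)
    (p : X → ℝ) (hp0 : ∀ x, 0 ≤ p x) (hp1 : ∑' x, p x = 1)
    (D : Finset (X → ℝ)) (hD : D.Nonempty)
    (hq0 : ∀ q ∈ D, ∀ x, 0 ≤ q x) (hq1 : ∀ q ∈ D, ∑' x, q x = 1) :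
    ∑' x, p x * L ((1 / D.card : ℝ) * ∑ q ∈ D,
        (if q x * ε₁ ≤ 3 * ((1 / D.card : ℝ) * ∑ r ∈ D, r x) * M then q x else 0))
      ≤ D.sup' hD (fun q => ∑' x, p x * L (q x)) + ε₁ / 3 := by
  classical
  have hcard : 0 < (D.card : ℝ) := by exact_mod_cast Finset.card_pos.mpr hD
  set c : ℝ := 1 / (D.card : ℝ) with hc
  have hc0 : 0 < c := by positivity
  have hps : Summable p := by
    by_contra h
    rw [tsum_eq_zero_of_not_summable h] at hp1; norm_num at hp1
  have hq_le1 : ∀ q ∈ D, ∀ x, q x ≤ 1 := by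
    intro q hq x
    have hs : Summable q := by
      by_contra h
      have := hq1 q hq
      rw [tsum_eq_zero_of_not_summable h] at this; norm_num at this
    calc q x ≤ ∑' y, q y := Summable.le_tsum hs x (fun y _ => hq0 q hq y)
    _ = 1 := hq1 q hq
  -- abbreviations
  set μ : X → ℝ := fun x => c * ∑ r ∈ D, r x with hμ
  set q' : (X → ℝ) → X → ℝ := fun q x =>
    if q x * ε₁ ≤ 3 * μ x * M then q x else 0 with hq'
  have hμ0 : ∀ x, 0 ≤ μ x := by
    intro x
    exact mul_nonneg hc0.le (Finset.sum_nonneg fun r hr => hq0 r hr x)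
  have hq'mem : ∀ q ∈ D, ∀ x, q' q x ∈ Set.Icc (0:ℝ) 1 := by
    intro q hq x
    simp only [hq']
    split
    · exact ⟨hq0 q hq x, hq_le1 q hq x⟩
    · exact ⟨le_refl 0, zero_le_one⟩
  have hwsum : ∑ _q ∈ D, c = 1 := by
    rw [Finset.sum_const, nsmul_eq_mul, hc]
    field_simp
  -- the mixture q' values lie in [0,1]
  have hmixmem : ∀ x, c * ∑ q ∈ D, q' q x ∈ Set.Icc (0:ℝ) 1 := by
    intro x
    constructor
    · exact mul_nonneg hc0.le (Finset.sum_nonneg fun q hq => (hq'mem q hq x).1)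
    · calc c * ∑ q ∈ D, q' q x ≤ c * ∑ _q ∈ D, (1:ℝ) :=
            mul_le_mul_of_nonneg_left
              (Finset.sum_le_sum fun q hq => (hq'mem q hq x).2) hc0.le
        _ = 1 := by rw [Finset.sum_const, nsmul_eq_mul, hc]; field_simp
  -- pointwise key inequality
  have key : ∀ x, L (c * ∑ q ∈ D, q' q x) ≤ c * ∑ q ∈ D, L (q x) + ε₁ / 3 := by
    intro x
    -- Jensen
    have jensen : L (c * ∑ q ∈ D, q' q x) ≤ ∑ q ∈ D, c * L (q' q x) := by
      have := hconv.map_sum_le (t := D) (w := fun _ => c) (p := fun q => q' q x)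
        (fun q _ => hc0.le) hwsum (fun q hq => hq'mem q hq x)
      simpa [Finset.mul_sum, smul_eq_mul] using this
    -- step B
    have stepB : ∀ q ∈ D, L (q' q x) ≤ L (q x) +
        (if q x * ε₁ ≤ 3 * μ x * M then 0 else M) := by
      intro q hq
      simp only [hq']
      split
      · simp
      · have h0 : L 0 ≤ M := (hL 0 (by norm_num)).2
        have h1 : 0 ≤ L (q x) := (hL (q x) ⟨hq0 q hq x, hq_le1 q hq x⟩).1
        linarith
    -- Markov
    have markov : c * ∑ q ∈ D, (if q x * ε₁ ≤ 3 * μ x * M then (0:ℝ) else M)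
        ≤ ε₁ / 3 := by
      by_cases hS : ∑ r ∈ D, r x = 0
      · have hall : ∀ q ∈ D, q x = 0 := by
          intro q hq
          have := (Finset.sum_eq_zero_iff_of_nonneg
            (fun r hr => hq0 r hr x)).1 hS q hq
          exact this
        have : ∀ q ∈ D, (if q x * ε₁ ≤ 3 * μ x * M then (0:ℝ) else M) = 0 := by
          intro q hq
          have hμx : μ x = 0 := by simp [hμ, hS]
          rw [if_pos (by rw [hall q hq, hμx]; norm_num)]
        rw [Finset.sum_congr rfl this, Finset.sum_const_zero, mul_zero]
        positivity
      · have hSpos : 0 < ∑ r ∈ D, r x :=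
          lt_of_le_of_ne (Finset.sum_nonneg fun r hr => hq0 r hr x) (Ne.symm hS)
        have hμpos : 0 < μ x := mul_pos hc0 hSpos
        have hterm : ∀ q ∈ D, (if q x * ε₁ ≤ 3 * μ x * M then (0:ℝ) else M)
            ≤ ε₁ / (3 * μ x) * q x := by
          intro q hq
          split_ifs with h
          · exact mul_nonneg (by positivity) (hq0 q hq x)
          · push_neg at h
            rw [div_mul_eq_mul_div, le_div_iff₀ (by positivity)]
            nlinarith
        calc c * ∑ q ∈ D, (if q x * ε₁ ≤ 3 * μ x * M then (0:ℝ) else M)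
            ≤ c * ∑ q ∈ D, ε₁ / (3 * μ x) * q x :=
              mul_le_mul_of_nonneg_left (Finset.sum_le_sum hterm) hc0.le
          _ = ε₁ / (3 * μ x) * μ x := by
              rw [← Finset.mul_sum, hμ]; ring
          _ = ε₁ / 3 := by
              field_simp
    calc L (c * ∑ q ∈ D, q' q x) ≤ ∑ q ∈ D, c * L (q' q x) := jensen
      _ ≤ ∑ q ∈ D, c * (L (q x) + (if q x * ε₁ ≤ 3 * μ x * M then 0 else M)) :=
          Finset.sum_le_sum fun q hq =>
            mul_le_mul_of_nonneg_left (stepB q hq) hc0.le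
      _ = c * ∑ q ∈ D, L (q x)
          + c * ∑ q ∈ D, (if q x * ε₁ ≤ 3 * μ x * M then (0:ℝ) else M) := by
          rw [Finset.mul_sum, Finset.mul_sum, ← Finset.sum_add_distrib]
          exact Finset.sum_congr rfl fun q hq => by ring
      _ ≤ c * ∑ q ∈ D, L (q x) + ε₁ / 3 := by linarith [markov]
  -- multiplied and rearranged pointwise inequality
  have keymul : ∀ x, p x * L (c * ∑ q ∈ D, q' q x)
      ≤ (∑ q ∈ D, c * (p x * L (q x))) + ε₁ / 3 * p x := by
    intro x
    have := mul_le_mul_of_nonneg_left (key x) (hp0 x)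
    calc p x * L (c * ∑ q ∈ D, q' q x)
        ≤ p x * (c * ∑ q ∈ D, L (q x) + ε₁ / 3) := this
      _ = (∑ q ∈ D, c * (p x * L (q x))) + ε₁ / 3 * p x := by
          rw [mul_add, Finset.mul_sum, Finset.mul_sum]
          congr 1
          · exact Finset.sum_congr rfl fun q hq => by ring
          · ring
  -- summability facts
  have hF : ∀ q ∈ D, Summable (fun x => p x * L (q x)) := by
    intro q hq
    apply Summable.of_nonneg_of_le
      (fun x => mul_nonneg (hp0 x) (hL (q x) ⟨hq0 q hq x, hq_le1 q hq x⟩).1)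
      (fun x => ?_) (hps.mul_left M)
    calc p x * L (q x) ≤ p x * M :=
          mul_le_mul_of_nonneg_left (hL (q x) ⟨hq0 q hq x, hq_le1 q hq x⟩).2 (hp0 x)
      _ = M * p x := mul_comm _ _
  have hsumL : Summable (fun x => p x * L (c * ∑ q ∈ D, q' q x)) := by
    apply Summable.of_nonneg_of_le
      (fun x => mul_nonneg (hp0 x) (hL _ (hmixmem x)).1)
      (fun x => ?_) (hps.mul_left M)
    calc p x * L (c * ∑ q ∈ D, q' q x) ≤ p x * M :=
          mul_le_mul_of_nonneg_left (hL _ (hmixmem x)).2 (hp0 x)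
      _ = M * p x := mul_comm _ _
  have hsumR : Summable (fun x => (∑ q ∈ D, c * (p x * L (q x))) + ε₁ / 3 * p x) := by
    apply Summable.add
    · apply summable_sum
      intro q hq
      exact (hF q hq).mul_left c
    · exact hps.mul_left _
  -- take tsum
  have tsum_le : ∑' x, p x * L (c * ∑ q ∈ D, q' q x)
      ≤ ∑' x, ((∑ q ∈ D, c * (p x * L (q x))) + ε₁ / 3 * p x) :=
    Summable.tsum_le_tsum keymul hsumL hsumR
  have tsum_rhs : ∑' x, ((∑ q ∈ D, c * (p x * L (q x))) + ε₁ / 3 * p x)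
      = (∑ q ∈ D, c * ∑' x, p x * L (q x)) + ε₁ / 3 := by
    rw [Summable.tsum_add (summable_sum fun q hq => (hF q hq).mul_left c) (hps.mul_left _)]
    rw [Summable.tsum_finsetSum (fun q hq => (hF q hq).mul_left c)]
    rw [tsum_mul_left, hp1, mul_one]
    congr 1
    exact Finset.sum_congr rfl fun q hq => (tsum_mul_left)
  -- average ≤ sup'
  have havg : (∑ q ∈ D, c * ∑' x, p x * L (q x))
      ≤ D.sup' hD (fun q => ∑' x, p x * L (q x)) := by
    set S := D.sup' hD (fun q => ∑' x, p x * L (q x)) with hS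
    calc ∑ q ∈ D, c * ∑' x, p x * L (q x) ≤ ∑ _q ∈ D, c * S :=
          Finset.sum_le_sum fun q hq =>
            mul_le_mul_of_nonneg_left
              (Finset.le_sup' (fun q => ∑' x, p x * L (q x)) hq) hc0.le
      _ = S := by
          rw [Finset.sum_const, nsmul_eq_mul, hc]
          field_simp
  show ∑' x, p x * L (c * ∑ q ∈ D, q' q x) ≤ _
  calc ∑' x, p x * L (c * ∑ q ∈ D, q' q x)
      ≤ (∑ q ∈ D, c * ∑' x, p x * L (q x)) + ε₁ / 3 := by
        rw [← tsum_rhs]; exact tsum_le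
    _ ≤ D.sup' hD (fun q => ∑' x, p x * L (q x)) + ε₁ / 3 := by linarith
end

section
/- Let p be a probability distribution over a countable set X and q₁, ..., q_R distributions such that for each i, Loss(q_i) ≤ OPT + ε/2 where Loss(q) = E_{x∼p}[L(q(x))] for a loss L bounded in [0,M]. Suppose a uniformly random index i ∈ {1,...,R} satisfies Pr_{x∼p}[x ∈ supp(q^i) ∧ ∀ j > i, x ∉ supp(q^j)] ≤ 16/R with probability at least 15/16, and define q̂ from q^i by zeroing its mass outside A^i = {x : ∃ j > i, x ∈ supp(q^j)} (redirecting to a fixed point with p-mass 0). If R ≥ 32M/ε, then with probability at least 15/16 over the choice of i, Loss(q̂) ≤ OPT + ε. -/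
open scoped Classical BigOperators

theorem stmt16 {X : Type*} [Countable X] (M ε OPT : ℝ) (hM : 0 < M) (hε : 0 < ε)
    (L : ℝ → ℝ) (hanti : AntitoneOn L (Set.Icc 0 1))
    (hL : ∀ t ∈ Set.Icc (0:ℝ) 1, L t ∈ Set.Icc 0 M)
    (p : X → ℝ) (hp0 : ∀ x, 0 ≤ p x) (hp1 : ∑' x, p x = 1)
    (R : ℕ) (hR : 32 * M / ε ≤ R)
    (q : Fin R → X → ℝ) (hq0 : ∀ i x, 0 ≤ q i x) (hq1 : ∀ i, ∑' x, q i x = 1)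
    (hloss : ∀ i, ∑' x, p x * L (q i x) ≤ OPT + ε / 2)
    (hidx : (15:ℝ)/16 ≤ ((Finset.univ.filter (fun i : Fin R =>
        (∑' x, (if 0 < q i x ∧ ∀ j : Fin R, i < j → ¬ 0 < q j x then p x else 0))
          ≤ 16 / R)).card : ℝ) / R) :
    (15:ℝ)/16 ≤ ((Finset.univ.filter (fun i : Fin R =>
        (∑' x, p x * L (if ∃ j : Fin R, i < j ∧ 0 < q j x then q i x else 0))
          ≤ OPT + ε)).card : ℝ) / R := by
  have hRpos : 0 < (R:ℝ) := by
    have h1 : 0 < 32 * M / ε := by positivity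
    linarith
  have hp_sum : Summable p := by
    by_contra h
    rw [tsum_eq_zero_of_not_summable h] at hp1; norm_num at hp1
  have hL0 : L 0 ∈ Set.Icc 0 M := hL 0 ⟨le_refl _, zero_le_one⟩
  have key : ∀ i : Fin R,
      (∑' x, (if 0 < q i x ∧ ∀ j : Fin R, i < j → ¬ 0 < q j x then p x else 0)) ≤ 16 / R →
      (∑' x, p x * L (if ∃ j : Fin R, i < j ∧ 0 < q j x then q i x else 0)) ≤ OPT + ε := by
    intro i hi
    have hq1i := hq1 i
    have hqsum : Summable (q i) := by
      by_contra h
      rw [tsum_eq_zero_of_not_summable h] at hq1i; norm_num at hq1i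
    have hmem : ∀ x, q i x ∈ Set.Icc (0:ℝ) 1 := fun x =>
      ⟨hq0 i x, by rw [← hq1i]; exact Summable.le_tsum hqsum x fun y _ => hq0 i y⟩
    have hmem' : ∀ x, (if ∃ j : Fin R, i < j ∧ 0 < q j x then q i x else 0) ∈ Set.Icc (0:ℝ) 1 := by
      intro x
      by_cases h : ∃ j : Fin R, i < j ∧ 0 < q j x
      · simpa [h] using hmem x
      · simp [h]
    -- pointwise bound
    have hfg : ∀ x, p x * L (if ∃ j : Fin R, i < j ∧ 0 < q j x then q i x else 0) ≤
        p x * L (q i x) + M * (if 0 < q i x ∧ ∀ j : Fin R, i < j → ¬ 0 < q j x then p x else 0) := by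
      intro x
      by_cases h : ∃ j : Fin R, i < j ∧ 0 < q j x
      · have hc : ¬ (0 < q i x ∧ ∀ j : Fin R, i < j → ¬ 0 < q j x) := by
          rintro ⟨_, h2⟩
          obtain ⟨j, hj, hqj⟩ := h
          exact h2 j hj hqj
        rw [if_pos h, if_neg hc, mul_zero, add_zero]
      · by_cases h2 : 0 < q i x
        · have hc : 0 < q i x ∧ ∀ j : Fin R, i < j → ¬ 0 < q j x := by
            refine ⟨h2, fun j hj hqj => h ⟨j, hj, hqj⟩⟩
          have hLq := hL _ (hmem x)
          rw [if_neg h, if_pos hc]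
          nlinarith [hp0 x, hL0.2, hLq.1]
        · have hq0' : q i x = 0 := le_antisymm (not_lt.mp h2) (hq0 i x)
          have hc : ¬ (0 < q i x ∧ ∀ j : Fin R, i < j → ¬ 0 < q j x) := fun hc => h2 hc.1
          simp [h, hc, hq0']
    -- summability
    have hSf : Summable (fun x => p x * L (if ∃ j : Fin R, i < j ∧ 0 < q j x then q i x else 0)) := by
      refine Summable.of_nonneg_of_le (fun x => mul_nonneg (hp0 x) (hL _ (hmem' x)).1)
        (fun x => ?_) (hp_sum.mul_left M)
      have := (hL _ (hmem' x)).2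
      nlinarith [hp0 x]
    have hS1 : Summable (fun x => p x * L (q i x)) := by
      refine Summable.of_nonneg_of_le (fun x => mul_nonneg (hp0 x) (hL _ (hmem x)).1)
        (fun x => ?_) (hp_sum.mul_left M)
      have := (hL _ (hmem x)).2
      nlinarith [hp0 x]
    have hS2 : Summable (fun x => (if 0 < q i x ∧ ∀ j : Fin R, i < j → ¬ 0 < q j x then p x else 0)) := by
      refine Summable.of_nonneg_of_le (fun x => ?_) (fun x => ?_) hp_sum
      · split <;> simp [hp0 x]
      · split <;> simp [hp0 x]
    have hbound := Summable.tsum_le_tsum hfg hSf (hS1.add (hS2.mul_left M))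
    rw [Summable.tsum_add hS1 (hS2.mul_left M), tsum_mul_left] at hbound
    have h16 : M * ∑' x, (if 0 < q i x ∧ ∀ j : Fin R, i < j → ¬ 0 < q j x then p x else 0)
        ≤ M * (16 / R) := mul_le_mul_of_nonneg_left hi hM.le
    have hεR : 32 * M ≤ (R:ℝ) * ε := by
      rw [div_le_iff₀ hε] at hR; linarith
    have hfin : M * (16 / R) ≤ ε / 2 := by
      rw [show M * (16 / (R:ℝ)) = 16 * M / R by ring, div_le_iff₀ hRpos]
      nlinarith
    linarith [hloss i]
  refine hidx.trans ?_
  have hsub : (Finset.univ.filter (fun i : Fin R =>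
        (∑' x, (if 0 < q i x ∧ ∀ j : Fin R, i < j → ¬ 0 < q j x then p x else 0))
          ≤ 16 / R)) ⊆ (Finset.univ.filter (fun i : Fin R =>
        (∑' x, p x * L (if ∃ j : Fin R, i < j ∧ 0 < q j x then q i x else 0))
          ≤ OPT + ε)) := by
    intro i hi
    simp only [Finset.mem_filter, Finset.mem_univ, true_and] at hi ⊢
    exact key i hi
  have hcard : ((Finset.univ.filter (fun i : Fin R =>
        (∑' x, (if 0 < q i x ∧ ∀ j : Fin R, i < j → ¬ 0 < q j x then p x else 0))
          ≤ 16 / R)).card : ℝ) ≤ ((Finset.univ.filter (fun i : Fin R =>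
        (∑' x, p x * L (if ∃ j : Fin R, i < j ∧ 0 < q j x then q i x else 0))
          ≤ OPT + ε)).card : ℝ) := by exact_mod_cast Finset.card_le_card hsub
  exact div_le_div_of_nonneg_right hcard hRpos.le
end
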